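/- Let G be a strongly regular graph with parameters (n, k, 1, 2). Then every pair of distinct non-adjacent vertices of G lies in exactly one induced 4-cycle (as an antipodal pair), and hence the number of induced 4-cycles equals n*(n-k-1)/4. -/

import Mathlib

open SimpleGraph Finset

section Aux

variable {V : Type*} [Fintype V] (G : SimpleGraph V) [DecidableRel G.Adj]

lemma cycle4_common {s : Finset V} (e : G.induce (↑s : Set V) ≃g cycleGraph 4)
    {u v w : V} (hu : u ∈ s) (hv : v ∈ s) (hw : w ∈ s) (huv : u ≠ v) (hna : ¬G.Adj u v)
    (hwu : w ≠ u) (hwv : w ≠ v) : G.Adj u w ∧ G.Adj v w := by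
  have key : ∀ a b c : Fin 4, a ≠ b → c ≠ a → c ≠ b → ¬(cycleGraph 4).Adj a b →
      (cycleGraph 4).Adj a c ∧ (cycleGraph 4).Adj b c := by decide
  set a := e ⟨u, hu⟩
  set b := e ⟨v, hv⟩
  set c := e ⟨w, hw⟩
  have hab : a ≠ b := fun hh => huv (congrArg Subtype.val (e.injective hh))
  have hca : c ≠ a := fun hh => hwu (congrArg Subtype.val (e.injective hh))
  have hcb : c ≠ b := fun hh => hwv (congrArg Subtype.val (e.injective hh))
  have hnab : ¬(cycleGraph 4).Adj a b := by
    rw [e.map_rel_iff]; exact hna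
  obtain ⟨h1, h2⟩ := key a b c hab hca hcb hnab
  rw [e.map_rel_iff] at h1 h2
  exact ⟨h1, h2⟩

lemma count4 [DecidableEq V] {s : Finset V} (e : G.induce (↑s : Set V) ≃g cycleGraph 4) :
    ((s ×ˢ s).filter fun p => p.1 ≠ p.2 ∧ ¬G.Adj p.1 p.2).card = 4 := by
  have base : ((Finset.univ : Finset (Fin 4 × Fin 4)).filter
      fun p => p.1 ≠ p.2 ∧ ¬(cycleGraph 4).Adj p.1 p.2).card = 4 := by decide
  rw [← base]
  refine (Finset.card_bij (fun p _ => (((e.symm p.1 : ↥(↑s : Set V)) : V),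
    ((e.symm p.2 : ↥(↑s : Set V)) : V))) ?_ ?_ ?_).symm
  · intro p hp
    simp only [Finset.mem_filter, Finset.mem_univ, true_and] at hp
    simp only [Finset.mem_filter, Finset.mem_product]
    refine ⟨⟨(e.symm p.1).2, (e.symm p.2).2⟩, ?_, ?_⟩
    · intro hh
      exact hp.1 (e.symm.injective (Subtype.val_injective hh))
    · intro hh
      exact hp.2 (e.symm.map_rel_iff.mp hh)
  · intro p hp q hq hpq
    have h1 : ((e.symm p.1 : ↥(↑s : Set V)) : V) = ((e.symm q.1 : ↥(↑s : Set V)) : V) :=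
      congrArg Prod.fst hpq
    have h2 : ((e.symm p.2 : ↥(↑s : Set V)) : V) = ((e.symm q.2 : ↥(↑s : Set V)) : V) :=
      congrArg Prod.snd hpq
    exact Prod.ext (e.symm.injective (Subtype.val_injective h1))
      (e.symm.injective (Subtype.val_injective h2))
  · intro q hq
    simp only [Finset.mem_filter, Finset.mem_product] at hq
    obtain ⟨⟨h1, h2⟩, hne, hnadj⟩ := hq
    refine ⟨(e ⟨q.1, h1⟩, e ⟨q.2, h2⟩), ?_, ?_⟩
    · simp only [Finset.mem_filter, Finset.mem_univ, true_and]
      constructor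
      · intro hh
        exact hne (congrArg Subtype.val (e.injective hh))
      · intro hh
        exact hnadj (e.map_rel_iff.mp hh)
    · simp

set_option maxHeartbeats 1000000 in
lemma key_set [DecidableEq V] {n k : ℕ} (h : G.IsSRGWith n k 1 2) {u v : V}
    (huv : u ≠ v) (hna : ¬G.Adj u v) :
    {s : Finset V | s.card = 4 ∧ Nonempty (G.induce (↑s : Set V) ≃g cycleGraph 4) ∧
      u ∈ s ∧ v ∈ s}
    = {insert u (insert v (G.commonNeighbors u v).toFinset)} := by
  set W : Finset V := (G.commonNeighbors u v).toFinset with hWdef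
  have card2 : W.card = 2 := by
    rw [hWdef, Set.toFinset_card]; exact h.of_not_adj huv hna
  obtain ⟨w1, w2, hw12, hW⟩ := Finset.card_eq_two.mp card2
  have hmemW : ∀ w, w ∈ W ↔ G.Adj u w ∧ G.Adj v w := by
    intro w; rw [hWdef, Set.mem_toFinset, mem_commonNeighbors]
  have a1 : G.Adj u w1 := ((hmemW w1).mp (by simp [hW])).1
  have a2 : G.Adj v w1 := ((hmemW w1).mp (by simp [hW])).2
  have a3 : G.Adj u w2 := ((hmemW w2).mp (by simp [hW])).1
  have a4 : G.Adj v w2 := ((hmemW w2).mp (by simp [hW])).2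
  have hw1w2 : ¬G.Adj w1 w2 := by
    intro hadj
    have hc1 : Fintype.card (G.commonNeighbors w1 w2) = 1 := h.of_adj w1 w2 hadj
    have hsub : ({u, v} : Finset V) ⊆ (G.commonNeighbors w1 w2).toFinset := by
      intro x hx
      rw [Set.mem_toFinset, mem_commonNeighbors]
      rcases Finset.mem_insert.mp hx with rfl | hx
      · exact ⟨a1.symm, a3.symm⟩
      · rw [Finset.mem_singleton] at hx; subst hx; exact ⟨a2.symm, a4.symm⟩
    have := Finset.card_le_card hsub
    rw [Set.toFinset_card, hc1, Finset.card_pair huv] at this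
    omega
  have nuw1 : u ≠ w1 := a1.ne
  have nuw2 : u ≠ w2 := a3.ne
  have nvw1 : v ≠ w1 := a2.ne
  have nvw2 : v ≠ w2 := a4.ne
  set s₀ : Finset V := insert u (insert v W) with hs₀
  have hus : u ∈ s₀ := Finset.mem_insert_self _ _
  have hvs : v ∈ s₀ := Finset.mem_insert_of_mem (Finset.mem_insert_self _ _)
  have h1s : w1 ∈ s₀ := by simp [hs₀, hW]
  have h2s : w2 ∈ s₀ := by simp [hs₀, hW]
  have hcard : s₀.card = 4 := by
    rw [hs₀, hW]
    rw [Finset.card_insert_of_notMem (by simp [nuw1, nuw2, huv]),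
        Finset.card_insert_of_notMem (by simp [nvw1, nvw2]),
        Finset.card_pair hw12]
  -- build the iso
  have hiso : Nonempty (G.induce (↑s₀ : Set V) ≃g cycleGraph 4) := by
    have hmem : ∀ x ∈ s₀, x ∈ (↑s₀ : Set V) := fun x hx => hx
    have hv0 : ∀ i : Fin 4, (![u, w1, v, w2] : Fin 4 → V) i ∈ (↑s₀ : Set V) := by
      intro i; fin_cases i <;> simpa using (by assumption : _ ∈ s₀)
    set f : Fin 4 → ↥(↑s₀ : Set V) := fun i => ⟨![u, w1, v, w2] i, hv0 i⟩ with hf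
    have hfval : ∀ i : Fin 4, (f i : V) = ![u, w1, v, w2] i := fun i => rfl
    have hinj : Function.Injective f := by
      intro a b hab
      have : (![u, w1, v, w2] : Fin 4 → V) a = ![u, w1, v, w2] b := congrArg Subtype.val hab
      fin_cases a <;> fin_cases b <;>
        simp only [Matrix.cons_val_zero, Matrix.cons_val_one, Matrix.head_cons,
          Matrix.cons_val_two, Matrix.tail_cons, Matrix.cons_val_three,
          Matrix.cons_val_succ] at this <;>
        first
          | rfl
          | (exact absurd this (by assumption))
          | (exact absurd this.symm (by assumption))
    have hbij : Function.Bijective f := by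
      refine (Fintype.bijective_iff_injective_and_card f).mpr ⟨hinj, ?_⟩
      simp [hcard]
    refine ⟨RelIso.symm ⟨Equiv.ofBijective f hbij, ?_⟩⟩
    intro a b
    show (G.induce (↑s₀ : Set V)).Adj (f a) (f b) ↔ (cycleGraph 4).Adj a b
    have hadj : ∀ x y : ↥(↑s₀ : Set V),
        (G.induce (↑s₀ : Set V)).Adj x y ↔ G.Adj x.1 y.1 := fun _ _ => Iff.rfl
    rw [hadj, hfval, hfval]
    have a1' := a1.symm
    have a2' := a2.symm
    have a3' := a3.symm
    have a4' := a4.symm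
    have hna' : ¬G.Adj v u := fun hh => hna hh.symm
    have hw1w2' : ¬G.Adj w2 w1 := fun hh => hw1w2 hh.symm
    fin_cases a <;> fin_cases b <;>
      simp [cycleGraph_adj', a1, a1', a2, a2', a3, a3', a4, a4', hna, hna', hw1w2, hw1w2'] <;> decide
  -- set equality
  apply Set.eq_singleton_iff_unique_mem.mpr
  constructor
  · exact ⟨hcard, hiso, hus, hvs⟩
  · rintro s ⟨hc, ⟨e⟩, hus', hvs'⟩
    have hpair : ({u, v} : Finset V) ⊆ s := by
      intro x hx
      rcases Finset.mem_insert.mp hx with rfl | hx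
      · exact hus'
      · rw [Finset.mem_singleton] at hx; subst hx; exact hvs'
    have hsub : s \ {u, v} ⊆ W := by
      intro w hw
      rw [Finset.mem_sdiff] at hw
      obtain ⟨hws, hw2⟩ := hw
      simp only [Finset.mem_insert, Finset.mem_singleton, not_or] at hw2
      have := cycle4_common G e hus' hvs' hws huv hna hw2.1 hw2.2
      exact (hmemW w).mpr this
    have hcs : (s \ {u, v}).card = 2 := by
      rw [Finset.card_sdiff_of_subset hpair, hc, Finset.card_pair huv]
    have heq : s \ {u, v} = W :=
      Finset.eq_of_subset_of_card_le hsub (by rw [hcs, card2])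
    have : ({u, v} : Finset V) ∪ (s \ {u, v}) = s := Finset.union_sdiff_of_subset hpair
    rw [heq] at this
    rw [← this, hs₀]
    ext x
    simp [or_assoc]

end Aux

/-- The number of `m`-element vertex subsets of `G` inducing a cycle of length `m`. -/
noncomputable def inducedCycleCount {V : Type*} [Fintype V] (G : SimpleGraph V) (m : ℕ) : ℕ :=
  Set.ncard {s : Finset V | s.card = m ∧
    Nonempty (G.induce (↑s : Set V) ≃g SimpleGraph.cycleGraph m)}

set_option maxHeartbeats 1000000 in
theorem stmt_6 {V : Type*} [Fintype V] (G : SimpleGraph V) [DecidableRel G.Adj]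
    {n k : ℕ} (h : G.IsSRGWith n k 1 2) :
    (∀ u v : V, u ≠ v → ¬ G.Adj u v →
      Set.ncard {s : Finset V | s.card = 4 ∧
        Nonempty (G.induce (↑s : Set V) ≃g SimpleGraph.cycleGraph 4) ∧
        u ∈ s ∧ v ∈ s} = 1) ∧
    4 * inducedCycleCount G 4 = n * (n - k - 1) := by
  classical
  have part1 := fun (u v : V) (huv : u ≠ v) (hna : ¬G.Adj u v) => key_set G h huv hna
  constructor
  · intro u v huv hna
    rw [part1 u v huv hna, Set.ncard_singleton]
  · set C : Finset (Finset V) := Finset.univ.filter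
      (fun s => s.card = 4 ∧ Nonempty (G.induce (↑s : Set V) ≃g cycleGraph 4)) with hC
    have hCC : inducedCycleCount G 4 = C.card := by
      rw [inducedCycleCount, Set.ncard_eq_toFinset_card']
      congr 1
      ext s
      simp [hC]
    set T : Finset (V × V) := Finset.univ.filter
      (fun p => p.1 ≠ p.2 ∧ ¬G.Adj p.1 p.2) with hT
    set B : Finset ((V × V) × Finset V) :=
      (T ×ˢ C).filter (fun q => q.1.1 ∈ q.2 ∧ q.1.2 ∈ q.2) with hB
    -- count B by first coordinate
    have hB1 : B.card = T.card := by
      rw [Finset.card_eq_sum_card_fiberwise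
        (f := Prod.fst) (t := T)
        (fun q hq => by
          rw [hB, Finset.mem_coe, Finset.mem_filter, Finset.mem_product] at hq
          exact hq.1.1)]
      rw [Finset.card_eq_sum_ones T]
      apply Finset.sum_congr rfl
      intro p hp
      rw [hT, Finset.mem_filter] at hp
      obtain ⟨-, hne, hnadj⟩ := hp
      have hfib : B.filter (fun q => q.1 = p)
          = {p} ×ˢ (C.filter fun s => p.1 ∈ s ∧ p.2 ∈ s) := by
        ext q
        simp only [hB, Finset.mem_filter, Finset.mem_product, Finset.mem_singleton]
        constructor
        · rintro ⟨⟨⟨hqT, hqC⟩, hm⟩, rfl⟩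
          exact ⟨rfl, ⟨hqC, hm⟩⟩
        · rintro ⟨hq1, hqC, hm⟩
          refine ⟨⟨⟨?_, hqC⟩, ?_⟩, hq1⟩
          · rw [hq1, hT, Finset.mem_filter]
            exact ⟨Finset.mem_univ _, hne, hnadj⟩
          · rw [hq1]; exact hm
      have hone : (C.filter fun s => p.1 ∈ s ∧ p.2 ∈ s)
          = {insert p.1 (insert p.2 (G.commonNeighbors p.1 p.2).toFinset)} := by
        ext s
        have hiff := Set.ext_iff.mp (part1 p.1 p.2 hne hnadj) s
        simp only [Set.mem_setOf_eq, Set.mem_singleton_iff] at hiff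
        simp only [hC, Finset.mem_filter, Finset.mem_univ, true_and, Finset.mem_singleton]
        constructor
        · rintro ⟨⟨h1, h2⟩, h3, h4⟩
          exact hiff.mp ⟨h1, h2, h3, h4⟩
        · intro hs
          obtain ⟨h1, h2, h3, h4⟩ := hiff.mpr hs
          exact ⟨⟨h1, h2⟩, h3, h4⟩
      rw [hfib, hone, Finset.card_product]
      simp
    -- count B by second coordinate
    have hB2 : B.card = 4 * C.card := by
      rw [Finset.card_eq_sum_card_fiberwise
        (f := Prod.snd) (t := C)
        (fun q hq => by
          rw [hB, Finset.mem_coe, Finset.mem_filter, Finset.mem_product] at hq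
          exact hq.1.2)]
      rw [mul_comm, Finset.card_eq_sum_ones C, Finset.sum_mul, one_mul]
      apply Finset.sum_congr rfl
      intro s hs
      rw [hC, Finset.mem_filter] at hs
      obtain ⟨-, hc4, ⟨e⟩⟩ := hs
      have hfib : B.filter (fun q => q.2 = s)
          = ((s ×ˢ s).filter fun p => p.1 ≠ p.2 ∧ ¬G.Adj p.1 p.2) ×ˢ {s} := by
        ext q
        simp only [hB, hT, Finset.mem_filter, Finset.mem_product, Finset.mem_singleton,
          Finset.mem_univ, true_and]
        constructor
        · rintro ⟨⟨⟨⟨hne, hnadj⟩, hqC⟩, hm1, hm2⟩, rfl⟩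
          exact ⟨⟨⟨hm1, hm2⟩, hne, hnadj⟩, rfl⟩
        · rintro ⟨⟨⟨hm1, hm2⟩, hne, hnadj⟩, rfl⟩
          refine ⟨⟨⟨⟨hne, hnadj⟩, ?_⟩, hm1, hm2⟩, rfl⟩
          rw [hC, Finset.mem_filter]
          exact ⟨Finset.mem_univ _, hc4, ⟨e⟩⟩
      rw [hfib, Finset.card_product, Finset.card_singleton, mul_one, count4 G e]
    -- T.card = n * (n - k - 1)
    have hTcard : T.card = n * (n - k - 1) := by
      rw [Finset.card_eq_sum_card_fiberwise
        (f := Prod.fst) (t := Finset.univ) (fun q _ => Finset.mem_univ _)]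
      have hfib : ∀ u : V, (T.filter fun p => p.1 = u).card = n - k - 1 := by
        intro u
        have h1 : T.filter (fun p => p.1 = u)
            = {u} ×ˢ (Finset.univ.filter fun v => u ≠ v ∧ ¬G.Adj u v) := by
          ext q
          simp only [hT, Finset.mem_filter, Finset.mem_product, Finset.mem_singleton,
            Finset.mem_univ, true_and]
          constructor
          · rintro ⟨⟨hne, hnadj⟩, rfl⟩
            exact ⟨rfl, hne, hnadj⟩
          · rintro ⟨rfl, hne, hnadj⟩
            exact ⟨⟨hne, hnadj⟩, rfl⟩
        have h2 : (Finset.univ.filter fun v => u ≠ v ∧ ¬G.Adj u v)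
            = Finset.univ \ insert u (G.neighborFinset u) := by
          ext v
          simp only [Finset.mem_filter, Finset.mem_univ, true_and, Finset.mem_sdiff,
            Finset.mem_insert, mem_neighborFinset, not_or]
          rw [ne_comm, and_congr_left_iff]
          intro _; rfl
        rw [h1, Finset.card_product, Finset.card_singleton, one_mul, h2,
          Finset.card_sdiff_of_subset (Finset.subset_univ _),
          Finset.card_insert_of_notMem (G.notMem_neighborFinset_self u),
          G.card_neighborFinset_eq_degree, h.regular u, Finset.card_univ, h.card]
        omega
      rw [Finset.sum_congr rfl (fun u _ => hfib u), Finset.sum_const, Finset.card_univ,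
        h.card, smul_eq_mul]
    rw [hCC, ← hB2, hB1, hTcard]
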